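/- Let T > 0, I = [0,T], g, E ∈ C⁰(I,ℝ), φ ∈ C⁰(I, ℝ₊*), and suppose there exist η > 0 and ḡ ∈ ℝ with |g(t) - ḡ| ≤ η for all t ∈ I. If y solves y(0) = y₀, y'(t) = φ(t)·X₃(g(t) - y(t)) + E(t) on I where X₃(u) = u + u³, then |y(T) - ḡ| ≤ η + ∫₀ᵀ |E(t)| dt + 1/√(exp(2∫₀ᵀ φ(u) du) - 1). -/

import Mathlib

open Set Filter Topology

private lemma X3_mono {a b : ℝ} (h : a < b) : a + a^3 < b + b^3 := by
  nlinarith [sq_nonneg (a+b), sq_nonneg a, sq_nonneg b, sq_nonneg (a-b), sq_nonneg (a+b+1)]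

private lemma one_sided (T : ℝ) (hT : 0 < T)
    (g E φ : ℝ → ℝ)
    (hE : ContinuousOn E (Set.Icc 0 T))
    (hφc : ContinuousOn φ (Set.Icc 0 T))
    (hφpos : ∀ t ∈ Set.Icc (0:ℝ) T, 0 < φ t)
    (η gbar : ℝ)
    (hgbar : ∀ t ∈ Set.Icc (0:ℝ) T, |g t - gbar| ≤ η)
    (y : ℝ → ℝ)
    (hy : ∀ t ∈ Set.Icc (0:ℝ) T,
      HasDerivAt y (φ t * ((g t - y t) + (g t - y t)^3) + E t) t) :
    y T - gbar ≤ η + (∫ t in (0:ℝ)..T, |E t|) +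
      1 / Real.sqrt (Real.exp (2 * ∫ u in (0:ℝ)..T, φ u) - 1) := by
  have hT' : (0:ℝ) ≤ T := hT.le
  set c : ℝ → ℝ := fun t => max 0 (min t T) with hc
  have hc_cont : Continuous c := continuous_const.max (continuous_id.min continuous_const)
  have hcmem : ∀ t, c t ∈ Icc (0:ℝ) T :=
    fun t => ⟨le_max_left _ _, max_le hT' (min_le_right _ _)⟩
  have hceq : ∀ t ∈ Icc (0:ℝ) T, c t = t := fun t ht => by
    simp only [hc]; rw [min_eq_left ht.2, max_eq_right ht.1]
  set φ' : ℝ → ℝ := fun t => φ (c t) with hφ'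
  set E' : ℝ → ℝ := fun t => |E (c t)| with hE'
  have hφ'cont : Continuous φ' := hφc.comp_continuous hc_cont hcmem
  have hE'cont : Continuous E' := (hE.comp_continuous hc_cont hcmem).abs
  have hφ'pos : ∀ t, 0 < φ' t := fun t => hφpos _ (hcmem t)
  set Φ : ℝ → ℝ := fun t => ∫ s in (0:ℝ)..t, φ' s with hΦdef
  set F : ℝ → ℝ := fun t => ∫ s in (0:ℝ)..t, E' s with hFdef
  have hΦd : ∀ t, HasDerivAt Φ (φ' t) t :=
    fun t => (hφ'cont.integral_hasStrictDerivAt 0 t).hasDerivAt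
  have hFd : ∀ t, HasDerivAt F (E' t) t :=
    fun t => (hE'cont.integral_hasStrictDerivAt 0 t).hasDerivAt
  have hΦ0 : Φ 0 = 0 := intervalIntegral.integral_same
  have hF0 : F 0 = 0 := intervalIntegral.integral_same
  have hΦnonneg : ∀ t ∈ Icc (0:ℝ) T, 0 ≤ Φ t := fun t ht =>
    intervalIntegral.integral_nonneg ht.1 (fun s _ => (hφ'pos s).le)
  have hFnonneg : ∀ t ∈ Icc (0:ℝ) T, 0 ≤ F t := fun t ht =>
    intervalIntegral.integral_nonneg ht.1 (fun s _ => abs_nonneg _)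
  have hΦT : 0 < Φ T :=
    intervalIntegral.intervalIntegral_pos_of_pos (hφ'cont.intervalIntegrable 0 T) hφ'pos hT
  set B : ℝ → ℝ → ℝ := fun ε t => (Real.sqrt (Real.exp (2*(Φ t + ε)) - 1))⁻¹ with hBdef
  have hApos : ∀ ε t, 0 < ε → 0 ≤ Φ t → 0 < Real.exp (2*(Φ t + ε)) - 1 := by
    intro ε t hε hΦt
    have : (0:ℝ) < 2*(Φ t + ε) := by linarith
    linarith [Real.one_lt_exp_iff.mpr this]
  have hBpos : ∀ ε t, 0 < ε → 0 ≤ Φ t → 0 < B ε t := by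
    intro ε t hε hΦt
    exact inv_pos.mpr (Real.sqrt_pos.mpr (hApos ε t hε hΦt))
  have hBd : ∀ ε t, 0 < ε → 0 ≤ Φ t →
      HasDerivAt (B ε) (-(φ' t) * (B ε t + (B ε t)^3)) t := by
    intro ε t hε hΦt
    have hA : 0 < Real.exp (2*(Φ t + ε)) - 1 := hApos ε t hε hΦt
    have hAd : HasDerivAt (fun u => Real.exp (2*(Φ u + ε)) - 1)
        (Real.exp (2*(Φ t + ε)) * (2 * φ' t)) t :=
      ((((hΦd t).add_const ε).const_mul 2).exp).sub_const 1
    have hsd : HasDerivAt (fun u => Real.sqrt (Real.exp (2*(Φ u + ε)) - 1))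
        (1 / (2 * Real.sqrt (Real.exp (2*(Φ t + ε)) - 1)) *
          (Real.exp (2*(Φ t + ε)) * (2 * φ' t))) t :=
      (Real.hasDerivAt_sqrt hA.ne').comp t hAd
    have hspos : 0 < Real.sqrt (Real.exp (2*(Φ t + ε)) - 1) := Real.sqrt_pos.mpr hA
    have h := hsd.inv hspos.ne'
    refine HasDerivAt.congr_deriv h ?_
    symm
    set s := Real.sqrt (Real.exp (2*(Φ t + ε)) - 1) with hs
    have hs2 : s^2 = Real.exp (2*(Φ t + ε)) - 1 := Real.sq_sqrt hA.le
    have hexp : Real.exp (2*(Φ t + ε)) = s^2 + 1 := by linarith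
    have hBs : B ε t = s⁻¹ := rfl
    rw [hBs, hexp]
    field_simp
  have key : ∀ ε δ, 0 < ε → 0 < δ → y 0 - gbar < η + δ + B ε 0 →
      y T - gbar ≤ η + δ + F T + B ε T := by
    intro ε δ hε hδ h0
    set w : ℝ → ℝ := fun t => (y t - gbar) - (η + δ + F t + B ε t) with hwdef
    by_contra hcon
    push_neg at hcon
    have hwT : 0 ≤ w T := by simp only [hwdef]; linarith
    -- the set where w is nonnegative
    set S : Set ℝ := {t | t ∈ Icc (0:ℝ) T ∧ 0 ≤ w t} with hSdef
    have hSne : S.Nonempty := ⟨T, ⟨right_mem_Icc.mpr hT', hwT⟩⟩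
    have hSbdd : BddBelow S := ⟨0, fun x hx => hx.1.1⟩
    have hwcont : ContinuousOn w (Icc 0 T) := by
      apply ContinuousOn.sub
      · exact (ContinuousOn.sub (fun t ht => ((hy t ht).continuousAt.continuousWithinAt)) continuousOn_const)
      · apply ContinuousOn.add
        · exact continuousOn_const.add (fun t ht => (hFd t).continuousAt.continuousWithinAt)
        · intro t ht
          exact ((hBd ε t hε (hΦnonneg t ht)).continuousAt.continuousWithinAt)
    have hSclosed : IsClosed S := by
      have : S = Icc (0:ℝ) T ∩ w ⁻¹' (Ici 0) := by
        ext x; simp [hSdef, and_comm]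
      rw [this]
      exact hwcont.preimage_isClosed_of_isClosed isClosed_Icc isClosed_Ici
    set t₁ := sInf S with ht₁def
    have ht₁S : t₁ ∈ S := hSclosed.csInf_mem hSne hSbdd
    have ht₁Icc : t₁ ∈ Icc (0:ℝ) T := ht₁S.1
    have hw0 : w 0 < 0 := by
      simp only [hwdef, hF0]
      linarith
    have ht₁pos : 0 < t₁ := by
      rcases lt_or_eq_of_le ht₁Icc.1 with h | h
      · exact h
      · exact absurd (h ▸ ht₁S.2) (not_le.mpr hw0)
    have hlt : ∀ t ∈ Ico (0:ℝ) t₁, w t < 0 := by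
      intro t ht
      by_contra h; push_neg at h
      exact absurd (csInf_le hSbdd ⟨⟨ht.1, le_trans ht.2.le ht₁Icc.2⟩, h⟩) (not_le.mpr ht.2)
    -- derivative of w at t₁
    have hφ't₁ : φ' t₁ = φ t₁ := by show φ (c t₁) = φ t₁; rw [hceq t₁ ht₁Icc]
    have hE't₁ : E' t₁ = |E t₁| := by show |E (c t₁)| = |E t₁|; rw [hceq t₁ ht₁Icc]
    set z := g t₁ - y t₁ with hzdef
    set b := B ε t₁ with hbdef
    have hwd : HasDerivAt w ((φ t₁ * (z + z^3) + E t₁) -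
        (E' t₁ + (-(φ' t₁) * (b + b^3)))) t₁ :=
      ((hy t₁ ht₁Icc).sub_const gbar).sub
        (((hFd t₁).const_add (η + δ)).add (hBd ε t₁ hε (hΦnonneg t₁ ht₁Icc)))
    have hbpos : 0 < b := hBpos ε t₁ hε (hΦnonneg t₁ ht₁Icc)
    have hd_neg : (φ t₁ * (z + z^3) + E t₁) - (E' t₁ + (-(φ' t₁) * (b + b^3))) < 0 := by
      have hFt₁ : 0 ≤ F t₁ := hFnonneg t₁ ht₁Icc
      have hu : η + δ + F t₁ + b ≤ y t₁ - gbar := by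
        have := ht₁S.2; simp only [hwdef] at this; linarith
      have hgb : g t₁ - gbar ≤ η := (abs_le.mp (hgbar t₁ ht₁Icc)).2
      have hz : z < -b := by simp only [hzdef]; linarith
      have hX : z + z^3 < (-b) + (-b)^3 := X3_mono hz
      have hφt₁ : 0 < φ t₁ := hφpos t₁ ht₁Icc
      have hEt₁ : E t₁ ≤ |E t₁| := le_abs_self _
      rw [hφ't₁, hE't₁]
      nlinarith [mul_lt_mul_of_pos_left hX hφt₁]
    -- slope contradiction
    have hslope : Tendsto (slope w t₁) (𝓝[<] t₁) (𝓝 _) :=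
      (hasDerivAt_iff_tendsto_slope.mp hwd).mono_left
        (nhdsWithin_mono _ (fun x hx => ne_of_lt hx))
    have hev1 : ∀ᶠ x in 𝓝[<] t₁, slope w t₁ x < 0 := hslope.eventually (gt_mem_nhds hd_neg)
    have hev2 : Ioo (0:ℝ) t₁ ∈ 𝓝[<] t₁ := Ioo_mem_nhdsLT_of_mem ⟨ht₁pos, le_rfl⟩
    obtain ⟨x, hx1, hx2⟩ := (hev1.and hev2).exists
    have hwx : w x < 0 := hlt x ⟨hx2.1.le, hx2.2⟩
    have : 0 < slope w t₁ x := by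
      rw [slope_def_field]
      exact div_pos_of_neg_of_neg (by linarith [ht₁S.2]) (by linarith [hx2.2])
    linarith
  -- identify the integrals
  have hFT : F T = ∫ t in (0:ℝ)..T, |E t| := by
    apply intervalIntegral.integral_congr
    intro s hs
    rw [uIcc_of_le hT'] at hs
    show |E (c s)| = |E s|
    rw [hceq s hs]
  have hΦTeq : Φ T = ∫ u in (0:ℝ)..T, φ u := by
    apply intervalIntegral.integral_congr
    intro s hs
    rw [uIcc_of_le hT'] at hs
    show φ (c s) = φ s
    rw [hceq s hs]
  rw [← hFT, ← hΦTeq, one_div]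
  refine le_of_forall_pos_le_add fun ρ hρ => ?_
  have hA0 : 0 < Real.exp (2*(Φ T + 0)) - 1 := by
    have h2 : (0:ℝ) < 2*(Φ T + 0) := by linarith
    linarith [Real.one_lt_exp_iff.mpr h2]
  have hc1 : Continuous fun ε : ℝ => Real.sqrt (Real.exp (2*(Φ T + ε)) - 1) := by
    fun_prop
  have hcB : ContinuousAt (fun ε : ℝ => (Real.sqrt (Real.exp (2*(Φ T + ε)) - 1))⁻¹) 0 :=
    (hc1.continuousAt).inv₀ (Real.sqrt_pos.mpr hA0).ne'
  have hev1 : ∀ᶠ ε in 𝓝[>] (0:ℝ),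
      (Real.sqrt (Real.exp (2*(Φ T + ε)) - 1))⁻¹ <
        (Real.sqrt (Real.exp (2*(Φ T + 0)) - 1))⁻¹ + ρ/2 :=
    (hcB.tendsto.mono_left nhdsWithin_le_nhds).eventually
      (gt_mem_nhds (lt_add_of_pos_right _ (half_pos hρ)))
  have hdiv : Tendsto (fun ε : ℝ => B ε 0) (𝓝[>] (0:ℝ)) atTop := by
    have hg : Tendsto (fun ε : ℝ => Real.sqrt (Real.exp (2*(Φ 0 + ε)) - 1))
        (𝓝[>] (0:ℝ)) (𝓝[>] 0) := by
      rw [tendsto_nhdsWithin_iff]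
      constructor
      · have hgc : Continuous fun ε : ℝ => Real.sqrt (Real.exp (2*(Φ 0 + ε)) - 1) := by
          fun_prop
        have h0 : Real.sqrt (Real.exp (2*(Φ 0 + 0)) - 1) = 0 := by
          rw [hΦ0]; norm_num
        have := (hgc.tendsto 0).mono_left (nhdsWithin_le_nhds (s := Ioi (0:ℝ)))
        rwa [h0] at this
      · filter_upwards [self_mem_nhdsWithin] with ε hε
        have h2 : (0:ℝ) < 2*(Φ 0 + ε) := by rw [hΦ0]; simpa using hε
        exact Real.sqrt_pos.mpr (by linarith [Real.one_lt_exp_iff.mpr h2])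
    exact tendsto_inv_nhdsGT_zero.comp hg
  have hev2 : ∀ᶠ ε in 𝓝[>] (0:ℝ), y 0 - gbar - η < B ε 0 :=
    hdiv.eventually_gt_atTop _
  obtain ⟨ε, ⟨h1, h2⟩, hεpos⟩ := ((hev1.and hev2).and self_mem_nhdsWithin).exists
  have hkey := key ε (ρ/2) hεpos (half_pos hρ) (by linarith)
  have hBT : B ε T = (Real.sqrt (Real.exp (2*(Φ T + ε)) - 1))⁻¹ := rfl
  have hB0T : (Real.sqrt (Real.exp (2*(Φ T + 0)) - 1))⁻¹
      = (Real.sqrt (Real.exp (2*(Φ T)) - 1))⁻¹ := by norm_num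
  rw [hBT] at hkey
  rw [hB0T] at h1
  linarith

/-- Reach ODE: integral error bound at time T. -/
theorem reach_ode_integral_error (T : ℝ) (hT : 0 < T)
    (g E φ : ℝ → ℝ)
    (hg : ContinuousOn g (Set.Icc 0 T)) (hE : ContinuousOn E (Set.Icc 0 T))
    (hφc : ContinuousOn φ (Set.Icc 0 T))
    (hφpos : ∀ t ∈ Set.Icc (0:ℝ) T, 0 < φ t)
    (η gbar : ℝ) (hη : 0 < η)
    (hgbar : ∀ t ∈ Set.Icc (0:ℝ) T, |g t - gbar| ≤ η)
    (y : ℝ → ℝ) (y₀ : ℝ) (hy0 : y 0 = y₀)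
    (hy : ∀ t ∈ Set.Icc (0:ℝ) T,
      HasDerivAt y (φ t * ((g t - y t) + (g t - y t)^3) + E t) t) :
    |y T - gbar| ≤ η + (∫ t in (0:ℝ)..T, |E t|) +
      1 / Real.sqrt (Real.exp (2 * ∫ u in (0:ℝ)..T, φ u) - 1) := by
  have h1 := one_sided T hT g E φ hE hφc hφpos η gbar hgbar y hy
  have h2 := one_sided T hT (fun t => -g t) (fun t => -E t) φ
      hE.neg hφc hφpos η (-gbar)
      (fun t ht => by
        have := hgbar t ht
        rw [show -g t - -gbar = -(g t - gbar) by ring, abs_neg]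
        exact this)
      (fun t => -y t)
      (fun t ht => by
        have h := (hy t ht).neg
        refine h.congr_deriv ?_
        ring)
  have hEint : (∫ t in (0:ℝ)..T, |-E t|) = ∫ t in (0:ℝ)..T, |E t| := by
    simp [abs_neg]
  rw [hEint] at h2
  have h2' : -(y T - gbar) ≤ (η + ∫ t in (0:ℝ)..T, |E t|) +
      1 / Real.sqrt (Real.exp (2 * ∫ u in (0:ℝ)..T, φ u) - 1) := by
    have : -y T - -gbar = -(y T - gbar) := by ring
    rw [this] at h2
    exact h2
  exact abs_le.mpr ⟨by linarith, by linarith⟩
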